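/- (Theorem 3.2 (iv), Jacobian of the p-norm) Under the Haar-type hypotheses, let p ∈ ℝ with p ≥ 1, let d ≥ 1, fix an index i ∈ {1, …, d} and vectors û₁, …, û_d : Fin n → ℝ. Set C := ∑_{j=1}^d |D(û_j)|^p (entrywise absolute value and p-th power of the diagonals), and assume every diagonal entry of C is strictly positive and every diagonal entry of D(û_i) is nonzero. Then the map û_i ↦ H · C^{1/p} · Hᵀ e₀ (with the other arguments û_j, j ≠ i, held fixed; entrywise 1/p-th power of C) is Fréchet differentiable at û_i and its derivative is the linear map represented by the matrix H · [ C^{1/p − 1} · |D(û_i)|^{p−1} · sgn(D(û_i)) ] · Hᵀ. -/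

import Mathlib

open Matrix

lemma deriv_aux' {c a p : ℝ} (hp : 1 ≤ p) (ha : a ≠ 0) (hc : 0 < c + |a| ^ p) :
    HasDerivAt (fun t => (c + |t| ^ p) ^ p⁻¹)
      ((c + |a| ^ p) ^ (p⁻¹ - 1) * |a| ^ (p - 1) * Real.sign a) a := by
  have hp0 : p ≠ 0 := by linarith
  have h1 : HasDerivAt (fun t : ℝ => |t| ^ p)
      ((p * |a| ^ (p - 1)) * (SignType.sign a : ℝ)) a :=
    (Real.hasDerivAt_rpow_const (p := p) (Or.inl (abs_ne_zero.2 ha))).comp a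
      (hasDerivAt_abs ha)
  have h2 : HasDerivAt (fun t : ℝ => c + |t| ^ p)
      ((p * |a| ^ (p - 1)) * (SignType.sign a : ℝ)) a := h1.const_add c
  have h3 := (Real.hasDerivAt_rpow_const (p := p⁻¹) (Or.inl hc.ne')).comp a h2
  convert h3 using 1
  · rfl
  · rfl
  · rfl
  have hsign : Real.sign a = (SignType.sign a : ℝ) := by
    rcases ha.lt_or_gt with h | h
    · simp [Real.sign_of_neg h, h]
    · simp [Real.sign_of_pos h, h]
  rw [hsign]
  field_simp

/-- Theorem 3.2 (iv), Jacobian of the `p`-norm: under the Haar-type hypotheses, for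
real `p ≥ 1`, `d ≥ 1`, a fixed index `i` and vectors `u 1, …, u d`, with
`C := ∑ j, |D(u j)|^p` entrywise positive and every diagonal entry of `D(u i)`
nonzero, the map `x ↦ H · C(x)^{1/p} · Hᵀ e₀` (the `i`-th argument varying, the
others fixed) is Fréchet differentiable at `u i` with derivative represented by
the matrix `H · [C^{1/p−1} · |D(u i)|^{p−1} · sgn(D(u i))]  · Hᵀ`. -/
theorem haar_sg_p_norm_jacobian {n : ℕ} [NeZero n]
    (M : Fin n → Matrix (Fin n) (Fin n) ℝ)
    (hMsymm : ∀ k, (M k).IsSymm) (hM0 : M 0 = 1)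
    (P : (Fin n → ℝ) → Matrix (Fin n) (Fin n) ℝ)
    (hP : ∀ uh, P uh = ∑ k, uh k • M k)
    (hsym : ∀ uh wh : Fin n → ℝ, (P uh).mulVec wh = (P wh).mulVec uh)
    (e0 : Fin n → ℝ) (he0 : e0 = Pi.single 0 1)
    (H : Matrix (Fin n) (Fin n) ℝ) (hH : Hᵀ * H = 1)
    (hdiag : ∀ k, (Hᵀ * M k * H).IsDiag)
    (p : ℝ) (hp : 1 ≤ p) (d : ℕ) (hd : 1 ≤ d)
    (i : Fin d) (u : Fin d → (Fin n → ℝ))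
    (Cd : Fin n → ℝ)
    (hCd : Cd = fun k => ∑ j, |(Hᵀ * P (u j) * H) k k| ^ p)
    (hCpos : ∀ k, 0 < Cd k)
    (hui : ∀ k, (Hᵀ * P (u i) * H) k k ≠ 0) :
    HasFDerivAt
      (fun x : Fin n → ℝ =>
        (H * Matrix.diagonal
          (fun k => (∑ j, |(Hᵀ * P (Function.update u i x j) * H) k k| ^ p) ^ p⁻¹)
          * Hᵀ).mulVec e0)
      (LinearMap.toContinuousLinearMap
        (Matrix.mulVecLin
          (H * Matrix.diagonal
            (fun k => Cd k ^ (p⁻¹ - 1) * |(Hᵀ * P (u i) * H) k k| ^ (p - 1)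
              * Real.sign ((Hᵀ * P (u i) * H) k k)) * Hᵀ)))
      (u i) := by
  classical
  set B : Matrix (Fin n) (Fin n) ℝ := Matrix.of (fun k m => (Hᵀ * M m * H) k k) with hB
  have hBentry : ∀ (x : Fin n → ℝ) (k : Fin n),
      (Hᵀ * P x * H) k k = B.mulVec x k := by
    intro x k
    rw [hP, Matrix.mul_sum, Matrix.sum_mul, Matrix.sum_apply]
    simp only [Matrix.mul_smul, Matrix.smul_mul, Matrix.smul_apply, smul_eq_mul]
    simp [Matrix.mulVec, dotProduct, hB, mul_comm]
  set a : Fin n → ℝ := fun k => B.mulVec (u i) k with ha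
  set c : Fin n → ℝ :=
    fun k => ∑ j ∈ Finset.univ.erase i, |(Hᵀ * P (u j) * H) k k| ^ p with hc
  have hsplit : ∀ (x : Fin n → ℝ) (k : Fin n),
      (∑ j, |(Hᵀ * P (Function.update u i x j) * H) k k| ^ p)
        = c k + |B.mulVec x k| ^ p := by
    intro x k
    rw [← Finset.add_sum_erase _ _ (Finset.mem_univ i), Function.update_self,
      hBentry, add_comm]
    congr 1
    refine Finset.sum_congr rfl fun j hj => ?_
    rw [Function.update_of_ne (Finset.ne_of_mem_erase hj)]
  have hCda : ∀ k, Cd k = c k + |a k| ^ p := by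
    intro k
    have := hsplit (u i) k
    rw [Function.update_eq_self] at this
    rw [hCd]
    exact this
  have hane : ∀ k, a k ≠ 0 := fun k => by
    have := hui k; rw [hBentry] at this; exact this
  have hcpos : ∀ k, 0 < c k + |a k| ^ p := fun k => hCda k ▸ hCpos k
  set w : Fin n → ℝ := Hᵀ.mulVec e0 with hw
  set g : Fin n → ℝ := fun k =>
    Cd k ^ (p⁻¹ - 1) * |(Hᵀ * P (u i) * H) k k| ^ (p - 1)
      * Real.sign ((Hᵀ * P (u i) * H) k k) with hg
  -- key identity
  have hkey : ∀ (h : Fin n → ℝ) (k : Fin n),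
      B.mulVec h k * w k = Hᵀ.mulVec h k := by
    intro h k
    have hPe0 : P e0 = 1 := by
      rw [hP, he0, Finset.sum_eq_single 0]
      · simp [hM0]
      · intro b _ hb; simp [Pi.single_apply, hb]
      · simp
    have hh : (P h).mulVec e0 = h := by rw [hsym, hPe0, Matrix.one_mulVec]
    have hHH : H * Hᵀ = 1 := mul_eq_one_comm.mp hH
    have hDdiag : ∀ k' m : Fin n, k' ≠ m → (Hᵀ * P h * H) k' m = 0 := by
      intro k' m hkm
      rw [hP, Matrix.mul_sum, Matrix.sum_mul, Matrix.sum_apply]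
      refine Finset.sum_eq_zero fun j _ => ?_
      rw [Matrix.mul_smul, Matrix.smul_mul, Matrix.smul_apply, hdiag j hkm,
        smul_zero]
    have h1 : Hᵀ.mulVec h = (Hᵀ * P h * H).mulVec w := by
      conv_lhs => rw [← hh, Matrix.mulVec_mulVec]
      rw [hw, Matrix.mulVec_mulVec]
      congr 1
      rw [Matrix.mul_assoc (Hᵀ * P h) H Hᵀ, hHH, Matrix.mul_one]
    rw [h1]
    have h2 : ((Hᵀ * P h * H) *ᵥ w) k = ∑ m, (Hᵀ * P h * H) k m * w m := rfl
    rw [h2, Finset.sum_eq_single k]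
    · rw [hBentry]
    · intro m _ hm; rw [hDdiag k m (Ne.symm hm), zero_mul]
    · simp
  -- the linear functionals
  set Lk : Fin n → ((Fin n → ℝ) →L[ℝ] ℝ) := fun k =>
    (ContinuousLinearMap.proj k).comp
      (LinearMap.toContinuousLinearMap B.mulVecLin) with hLk
  have hLkapp : ∀ k h, Lk k h = B.mulVec h k := fun k h => rfl
  -- derivative of each summand
  set dk : Fin n → ℝ := fun k =>
    (c k + |a k| ^ p) ^ (p⁻¹ - 1) * |a k| ^ (p - 1) * Real.sign (a k) with hdk
  have hder : HasFDerivAt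
      (fun x : Fin n → ℝ => ∑ k,
        (((c k + |B.mulVec x k| ^ p) ^ p⁻¹) * w k) • (fun q => H q k))
      (∑ k, ((w k • (dk k • Lk k)).smulRight (fun q => H q k))) (u i) := by
    refine HasFDerivAt.fun_sum fun k _ => ?_
    have h1k : HasFDerivAt (fun x : Fin n → ℝ => (c k + |B.mulVec x k| ^ p) ^ p⁻¹)
        (dk k • Lk k) (u i) := by
      have := (deriv_aux' (c := c k) (a := a k) hp (hane k) (hcpos k)).comp_hasFDerivAt
        (u i) ((Lk k).hasFDerivAt)
      exact this
    exact (h1k.mul_const (w k)).smul_const (fun q => H q k)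
  -- rewrite the function
  have hfun : (fun x : Fin n → ℝ =>
      (H * Matrix.diagonal
        (fun k => (∑ j, |(Hᵀ * P (Function.update u i x j) * H) k k| ^ p) ^ p⁻¹)
        * Hᵀ).mulVec e0)
      = fun x : Fin n → ℝ => ∑ k,
        (((c k + |B.mulVec x k| ^ p) ^ p⁻¹) * w k) • (fun q => H q k) := by
    funext x
    rw [← Matrix.mulVec_mulVec, ← Matrix.mulVec_mulVec]
    funext q
    rw [show H *ᵥ (Matrix.diagonal _ *ᵥ (Hᵀ *ᵥ e0)) = H *ᵥ (Matrix.diagonal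
      (fun k => (∑ j, |(Hᵀ * P (Function.update u i x j) * H) k k| ^ p) ^ p⁻¹) *ᵥ w) from rfl]
    rw [Matrix.mulVec]
    rw [show H q ⬝ᵥ _ = ∑ k, H q k * (Matrix.diagonal
      (fun k => (∑ j, |(Hᵀ * P (Function.update u i x j) * H) k k| ^ p) ^ p⁻¹) *ᵥ w) k from rfl]
    rw [Finset.sum_apply]
    refine Finset.sum_congr rfl fun k _ => ?_
    rw [Matrix.mulVec_diagonal, hsplit]
    simp [mul_comm, mul_assoc, mul_left_comm]
  rw [hfun]
  refine hder.congr_fderiv ?_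
  -- equality of the derivatives
  ext h q
  simp only [ContinuousLinearMap.coe_sum', Finset.sum_apply,
    ContinuousLinearMap.smulRight_apply, ContinuousLinearMap.smul_apply,
    smul_eq_mul, Pi.smul_apply]
  have hRHS : (LinearMap.toContinuousLinearMap
      (H * Matrix.diagonal g * Hᵀ).mulVecLin) h q
      = ((H * Matrix.diagonal g * Hᵀ) *ᵥ h) q := rfl
  rw [hRHS, show (H * Matrix.diagonal g * Hᵀ) *ᵥ h
      = H *ᵥ (Matrix.diagonal g *ᵥ (Hᵀ *ᵥ h)) by
    rw [Matrix.mulVec_mulVec, Matrix.mulVec_mulVec]]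
  have hq : (H *ᵥ (Matrix.diagonal g *ᵥ (Hᵀ *ᵥ h))) q
      = ∑ k, H q k * (Matrix.diagonal g *ᵥ (Hᵀ *ᵥ h)) k := rfl
  rw [hq]
  refine Finset.sum_congr rfl fun k _ => ?_
  rw [Matrix.mulVec_diagonal, hLkapp, ← hkey h k]
  have hgd : g k = dk k := by
    simp only [hg, hdk]
    rw [hCda k, hBentry (u i) k]
  rw [hgd]
  ring
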